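/- Let f : ℝ^d → ℝ be continuous and p-coercive for some p > 0, with a unique global minimizer x*. Suppose f is twice continuously differentiable on a neighborhood U of x* and x* is nondegenerate (the Hessian ∇²f(x*) is nonsingular). Then for every x ∈ ℝ^d there exists t_0 > 0 such that for all t ≥ t_0, the set prox_{tf}(x) is a singleton. -/

import Mathlib

open Filter Metric

variable {E : Type*} [NormedAddCommGroup E] [InnerProductSpace ℝ E] [FiniteDimensional ℝ E]

set_option maxHeartbeats 2000000 in
theorem aux_prox (f : E → ℝ) (hcont : Continuous f)
    (xstar : E) (hmin : ∀ z, f xstar ≤ f z)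
    (huniq : ∀ z, (∀ w, f z ≤ f w) → z = xstar)
    (U : Set E) (hU : U ∈ nhds xstar)
    (hC2 : ContDiffOn ℝ 2 f U)
    (hnondeg : Function.Injective (fderiv ℝ (fderiv ℝ f) xstar)) :
    ∀ x : E, ∃ t₀ > (0 : ℝ), ∀ t ≥ t₀,
      ∃! z : E, ∀ w, f z + ‖z - x‖ ^ 2 / (2 * t) ≤ f w + ‖w - x‖ ^ 2 / (2 * t) := by
  intro x
  rcases subsingleton_or_nontrivial E with hE | hE
  · refine ⟨1, one_pos, fun t ht => ⟨x, fun w => ?_, fun y _ => Subsingleton.elim y x⟩⟩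
    rw [Subsingleton.elim w x]
  set O := interior U with hOdef
  have hO : IsOpen O := isOpen_interior
  have hxO : xstar ∈ O := mem_interior_iff_mem_nhds.2 hU
  have hC2O : ContDiffOn ℝ 2 f O := hC2.mono interior_subset
  set D := fderiv ℝ f with hDdef
  set H := fderiv ℝ D with hHdef
  have hD : ContDiffOn ℝ 1 D O := hC2O.fderiv_of_isOpen hO (by norm_num)
  have hHcont : ContinuousOn H O := hD.continuousOn_fderiv_of_isOpen hO le_rfl
  have hfdiff : ∀ z ∈ O, DifferentiableAt ℝ f z := fun z hz =>
    (hC2O.contDiffAt (hO.mem_nhds hz)).differentiableAt two_ne_zero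
  have hfD : ∀ z ∈ O, HasFDerivAt D (H z) z := fun z hz =>
    ((hD.contDiffAt (hO.mem_nhds hz)).differentiableAt one_ne_zero).hasFDerivAt
  have hD0 : D xstar = 0 := by
    refine IsLocalMin.fderiv_eq_zero ?_
    exact (Filter.Eventually.of_forall (fun y => hmin y) : IsLocalMin f xstar)
  -- derivative of f along a line
  have hline : ∀ (z v : E), z ∈ O → HasDerivAt (fun s : ℝ => D (z + s • v) v) (H z v v) 0 := by
    intro z v hz
    have hL : HasDerivAt (fun s : ℝ => z + s • v) ((1:ℝ) • v) 0 :=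
      ((hasDerivAt_id (0:ℝ)).smul_const v).const_add z
    have hz0 : z + (0:ℝ) • v = z := by simp
    have hDz : HasFDerivAt D (H z) (z + (0:ℝ) • v) := by rw [hz0]; exact hfD z hz
    have hDL : HasDerivAt (fun s : ℝ => D (z + s • v)) (H z ((1:ℝ) • v)) 0 :=
      hDz.comp_hasDerivAt 0 hL
    have := hDL.clm_apply (hasDerivAt_const (0:ℝ) v)
    simpa using this
  have hlinef : ∀ (z v : E) (s : ℝ), z + s • v ∈ O →
      HasDerivAt (fun s : ℝ => f (z + s • v)) (D (z + s • v) v) s := by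
    intro z v s hs
    have hL : HasDerivAt (fun s : ℝ => z + s • v) ((1:ℝ) • v) s :=
      ((hasDerivAt_id s).smul_const v).const_add z
    have hf : HasFDerivAt f (D (z + s • v)) (z + s • v) := (hfdiff _ hs).hasFDerivAt
    have h := hf.comp_hasDerivAt s hL; rw [one_smul] at h; exact h
  -- positive semidefiniteness of Hessian at the minimum
  have hpsd : ∀ v : E, 0 ≤ H xstar v v := by
    intro v
    by_contra hneg
    push_neg at hneg
    set ψ : ℝ → ℝ := fun s => D (xstar + s • v) v with hψdef
    have hψ0 : HasDerivAt ψ (H xstar v v) 0 := hline xstar v hxO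
    have hψ00 : ψ 0 = 0 := by simp [hψdef, hD0]
    have h1 : ∀ᶠ s in nhdsWithin (0:ℝ) {(0:ℝ)}ᶜ, slope ψ 0 s < 0 :=
      (hasDerivAt_iff_tendsto_slope.mp hψ0).eventually (gt_mem_nhds hneg)
    have hLc : Continuous (fun s : ℝ => xstar + s • v) :=
      continuous_const.add (continuous_id.smul continuous_const)
    have h0v : xstar + (0:ℝ) • v = xstar := by simp
    have h2 : ∀ᶠ s in nhds (0:ℝ), xstar + s • v ∈ O :=
      hLc.continuousAt.eventually_mem (by rw [h0v]; exact hO.mem_nhds hxO)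
    have hev := h1.and (h2.filter_mono nhdsWithin_le_nhds)
    obtain ⟨ε, hε, hsub⟩ := Metric.mem_nhdsWithin_iff.mp hev
    have hkey : ∀ s : ℝ, 0 < s → s < ε → slope ψ 0 s < 0 ∧ xstar + s • v ∈ O := by
      intro s hs hsε
      refine hsub ⟨?_, ?_⟩
      · rw [Metric.mem_ball, Real.dist_eq, sub_zero, abs_of_pos hs]; exact hsε
      · exact fun h => hs.ne' h
    set s₁ : ℝ := ε / 2 with hs₁def
    have hs₁ : 0 < s₁ := by positivity
    have hs₁ε : s₁ < ε := by rw [hs₁def]; linarith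
    have hφc : ContinuousOn (fun s : ℝ => f (xstar + s • v)) (Set.Icc 0 s₁) :=
      (hcont.comp hLc).continuousOn
    have hφd : ∀ u ∈ Set.Ioo (0:ℝ) s₁, HasDerivAt (fun s : ℝ => f (xstar + s • v)) (ψ u) u := by
      intro u hu
      exact hlinef xstar v u (hkey u hu.1 (hu.2.trans hs₁ε)).2
    obtain ⟨ξ, hξ, hξslope⟩ := exists_hasDerivAt_eq_slope (fun s : ℝ => f (xstar + s • v)) ψ hs₁ hφc hφd
    have hψξ : ψ ξ < 0 := by
      have := (hkey ξ hξ.1 (hξ.2.trans hs₁ε)).1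
      rw [slope_def_field, hψ00, sub_zero, sub_zero, div_neg_iff] at this
      rcases this with ⟨h, h'⟩ | ⟨h, h'⟩
      · exact absurd h' (not_lt.2 hξ.1.le)
      · exact h
    have : f (xstar + s₁ • v) < f (xstar + (0:ℝ) • v) := by
      rw [hξslope, sub_zero, div_neg_iff] at hψξ
      rcases hψξ with ⟨h, h'⟩ | ⟨h, h'⟩
      · exact absurd h' (not_lt.2 hs₁.le)
      · linarith [h]
    rw [h0v] at this
    exact absurd (hmin _) (not_le.2 this)
  have hsymm : ∀ v w : E, H xstar v w = H xstar w v := by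
    refine fun v w => second_derivative_symmetric_of_eventually (f := f) ?_ (hfD xstar hxO) v w
    filter_upwards [hO.mem_nhds hxO] with y hy using (hfdiff y hy).hasFDerivAt
  -- positive definiteness
  have hpd : ∀ v : E, v ≠ 0 → 0 < H xstar v v := by
    intro v hv
    rcases (hpsd v).lt_or_eq with h | h
    · exact h
    exfalso
    apply hv
    apply hnondeg
    rw [map_zero]
    ext w
    rw [ContinuousLinearMap.zero_apply]
    have hq : ∀ s : ℝ, 0 ≤ 2 * s * (H xstar v w) + s ^ 2 * (H xstar w w) := by
      intro s
      have hs := hpsd (v + s • w)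
      have hexp : H xstar (v + s • w) (v + s • w) = H xstar v v + s * (H xstar v w)
          + s * (H xstar w v) + s ^ 2 * (H xstar w w) := by
        simp only [map_add, map_smul, ContinuousLinearMap.add_apply,
          ContinuousLinearMap.smul_apply, smul_eq_mul]
        ring
      rw [hexp, hsymm w v, ← h] at hs
      linarith
    set a : ℝ := H xstar w w with hadef
    set b : ℝ := H xstar v w with hbdef
    have haa : 0 ≤ a := hpsd w
    have hq' : ∀ s : ℝ, 0 ≤ 2 * s * b + s ^ 2 * a := hq
    set c : ℝ := -b / (a + 1) with hcdef
    have ha1 : (0:ℝ) < a + 1 := by linarith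
    have hsa : c * (a + 1) = -b := by rw [hcdef]; field_simp
    have h3 : 0 ≤ (2 * c * b + c ^ 2 * a) * (a + 1) ^ 2 :=
      mul_nonneg (hq' c) (sq_nonneg _)
    have h4 : (2 * c * b + c ^ 2 * a) * (a + 1) ^ 2 = -(b ^ 2 * (a + 2)) := by
      calc (2 * c * b + c ^ 2 * a) * (a + 1) ^ 2
          = 2 * (c * (a + 1)) * (b * (a + 1)) + (c * (a + 1)) ^ 2 * a := by ring
        _ = 2 * (-b) * (b * (a + 1)) + (-b) ^ 2 * a := by rw [hsa]
        _ = -(b ^ 2 * (a + 2)) := by ring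
    have hb2 : b ^ 2 ≤ 0 := by nlinarith [h3, h4]
    have : b = 0 := by
      have := le_antisymm hb2 (sq_nonneg b)
      exact pow_eq_zero_iff two_ne_zero |>.mp this
    exact this
  -- minimum of the Hessian quadratic form on the unit sphere
  obtain ⟨m, hm, hqm⟩ : ∃ m > (0:ℝ), ∀ v : E, m * ‖v‖ ^ 2 ≤ H xstar v v := by
    have hSne : (sphere (0:E) 1).Nonempty := NormedSpace.sphere_nonempty.mpr zero_le_one
    have hcq : ContinuousOn (fun v : E => H xstar v v) (sphere (0:E) 1) :=
      ((H xstar).continuous.clm_apply continuous_id).continuousOn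
    obtain ⟨v₀, hv₀S, hv₀min⟩ := (isCompact_sphere (0:E) 1).exists_isMinOn hSne hcq
    have hv₀ : v₀ ≠ 0 := by
      intro h
      rw [h, mem_sphere_zero_iff_norm, norm_zero] at hv₀S
      norm_num at hv₀S
    refine ⟨H xstar v₀ v₀, hpd v₀ hv₀, fun v => ?_⟩
    rcases eq_or_ne v 0 with rfl | hv
    · simp
    have hnv : (0:ℝ) < ‖v‖ := norm_pos_iff.mpr hv
    set u : E := ‖v‖⁻¹ • v with hudef
    have huS : u ∈ sphere (0:E) 1 := by
      rw [mem_sphere_zero_iff_norm, hudef, norm_smul, norm_inv, norm_norm,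
        inv_mul_cancel₀ hnv.ne']
    have hvu : v = ‖v‖ • u := by
      rw [hudef, smul_smul, mul_inv_cancel₀ hnv.ne', one_smul]
    have hle : H xstar v₀ v₀ ≤ H xstar u u := hv₀min huS
    have hcalc : H xstar v v = ‖v‖ ^ 2 * (H xstar u u) := by
      conv_lhs => rw [hvu]
      simp only [map_smul, ContinuousLinearMap.smul_apply, smul_eq_mul]
      ring
    rw [hcalc, mul_comm (H xstar v₀ v₀) (‖v‖ ^ 2)]
    exact mul_le_mul_of_nonneg_left hle (sq_nonneg _)
  -- a ball around xstar where the Hessian is uniformly positive definite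
  obtain ⟨δ, hδ, hδO, hHz⟩ : ∃ δ > (0:ℝ), closedBall xstar δ ⊆ O ∧
      ∀ z ∈ closedBall xstar δ, ∀ v : E, m / 2 * ‖v‖ ^ 2 ≤ H z v v := by
    have hHat : ContinuousAt H xstar := hHcont.continuousAt (hO.mem_nhds hxO)
    have h1 : ∀ᶠ z in nhds xstar, ‖H z - H xstar‖ < m / 2 := by
      have := hHat (Metric.ball_mem_nhds (H xstar) (half_pos hm))
      exact Filter.mem_of_superset this fun z hz => by
        have hz' : dist (H z) (H xstar) < m / 2 := hz
        show ‖H z - H xstar‖ < m / 2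
        exact lt_of_eq_of_lt (dist_eq_norm (H z) (H xstar)).symm hz'
    obtain ⟨ε, hε, hball⟩ := Metric.mem_nhds_iff.mp (Filter.inter_mem h1 (hO.mem_nhds hxO))
    refine ⟨ε / 2, by positivity, ?_, ?_⟩
    · intro z hz
      exact (hball ((closedBall_subset_ball (by linarith)) hz)).2
    · intro z hz v
      have hmem := hball ((closedBall_subset_ball (by linarith)) hz)
      have hlt : ‖H z - H xstar‖ < m / 2 := hmem.1
      have hb := ContinuousLinearMap.le_opNorm₂ (H z - H xstar) v v
      have heq : (H z - H xstar) v v = H z v v - H xstar v v := by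
        simp [ContinuousLinearMap.sub_apply]
      rw [heq, Real.norm_eq_abs] at hb
      have habs := abs_le.mp hb
      have hmul : ‖H z - H xstar‖ * ‖v‖ * ‖v‖ ≤ m / 2 * ‖v‖ * ‖v‖ :=
        mul_le_mul_of_nonneg_right
          (mul_le_mul_of_nonneg_right hlt.le (norm_nonneg v)) (norm_nonneg v)
      have hqv := hqm v
      have hsq : ‖v‖ * ‖v‖ = ‖v‖ ^ 2 := (sq ‖v‖).symm
      nlinarith [habs.1, hmul, hqv]
  -- strong monotonicity of the gradient on that ball
  have hmono : ∀ z₁ ∈ closedBall xstar δ, ∀ z₂ ∈ closedBall xstar δ,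
      m / 2 * ‖z₁ - z₂‖ ^ 2 ≤ (D z₁ - D z₂) (z₁ - z₂) := by
    intro z₁ hz₁ z₂ hz₂
    rcases eq_or_ne z₁ z₂ with rfl | hne
    · simp
    set v : E := z₁ - z₂ with hvdef
    set γ : ℝ → E := fun s => z₂ + s • v with hγdef
    have hmemcb : ∀ s ∈ Set.Icc (0:ℝ) 1, γ s ∈ closedBall xstar δ := fun s hs =>
      (convex_closedBall xstar δ).add_smul_sub_mem hz₂ hz₁ hs
    have hγc : Continuous γ := continuous_const.add (continuous_id.smul continuous_const)
    set ψ : ℝ → ℝ := fun s => D (γ s) v with hψdef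
    have hψc : ContinuousOn ψ (Set.Icc (0:ℝ) 1) := by
      have hDc : ContinuousOn D O := hD.continuousOn
      exact ((hDc.comp hγc.continuousOn fun s hs => hδO (hmemcb s hs)).clm_apply
        continuousOn_const)
    have hψd : ∀ u ∈ Set.Ioo (0:ℝ) 1, HasDerivAt ψ (H (γ u) v v) u := by
      intro u hu
      have hL : HasDerivAt γ ((1:ℝ) • v) u := ((hasDerivAt_id u).smul_const v).const_add z₂
      have hDz : HasFDerivAt D (H (γ u)) (γ u) := hfD _ (hδO (hmemcb u (Set.Ioo_subset_Icc_self hu)))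
      have hDL : HasDerivAt (fun s : ℝ => D (γ s)) (H (γ u) ((1:ℝ) • v)) u :=
        hDz.comp_hasDerivAt u hL
      simpa [hψdef] using hDL.clm_apply (hasDerivAt_const u v)
    obtain ⟨ξ, hξ, hξeq⟩ := exists_hasDerivAt_eq_slope ψ (fun u => H (γ u) v v) one_pos hψc hψd
    have hγ1 : γ 1 = z₁ := by rw [hγdef]; simp [hvdef]
    have hγ0 : γ 0 = z₂ := by rw [hγdef]; simp
    have hψ1 : ψ 1 = D z₁ v := by rw [hψdef]; simp only; rw [hγ1]
    have hψ0 : ψ 0 = D z₂ v := by rw [hψdef]; simp only; rw [hγ0]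
    have hbound := hHz (γ ξ) (hmemcb ξ (Set.Ioo_subset_Icc_self hξ)) v
    rw [hξeq, hψ1, hψ0, sub_zero, div_one] at hbound
    rw [ContinuousLinearMap.sub_apply]
    exact hbound
  -- localization of minimizers
  obtain ⟨t₀, ht₀, hloc⟩ : ∃ t₀ ≥ (1:ℝ), ∀ t ≥ t₀, ∀ z,
      (∀ w, f z + ‖z - x‖ ^ 2 / (2 * t) ≤ f w + ‖w - x‖ ^ 2 / (2 * t)) →
      z ∈ closedBall xstar δ := by
    set R : ℝ := ‖xstar - x‖ with hRdef
    have hRnn : 0 ≤ R := norm_nonneg _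
    have hzball : ∀ t : ℝ, 0 < t → ∀ z,
        (∀ w, f z + ‖z - x‖ ^ 2 / (2 * t) ≤ f w + ‖w - x‖ ^ 2 / (2 * t)) →
        z ∈ closedBall x R ∧ f z ≤ f xstar + R ^ 2 / (2 * t) := by
      intro t ht z hz
      have h1 := hz xstar
      have h2 := hmin z
      have h2t : (0:ℝ) < 2 * t := by linarith
      have hle : ‖z - x‖ ^ 2 / (2 * t) ≤ R ^ 2 / (2 * t) := by rw [hRdef]; linarith
      have hsq : ‖z - x‖ ^ 2 ≤ R ^ 2 := (div_le_div_iff_of_pos_right h2t).mp hle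
      constructor
      · rw [mem_closedBall, dist_eq_norm]
        exact (pow_le_pow_iff_left₀ (norm_nonneg _) hRnn two_ne_zero).mp hsq
      · have hnn : 0 ≤ ‖z - x‖ ^ 2 / (2 * t) := by positivity
        have : f z ≤ f z + ‖z - x‖ ^ 2 / (2 * t) := le_add_of_nonneg_right hnn
        rw [hRdef]
        linarith
    rcases Set.eq_empty_or_nonempty (closedBall x R \ ball xstar δ) with hK | hK
    · refine ⟨1, le_refl 1, fun t ht z hz => ?_⟩
      have h := (hzball t (by linarith) z hz).1
      exact ball_subset_closedBall ((Set.diff_eq_empty.mp hK) h)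
    · have hKc : IsCompact (closedBall x R \ ball xstar δ) :=
        (isCompact_closedBall x R).diff isOpen_ball
      obtain ⟨y₀, hy₀K, hy₀min⟩ := hKc.exists_isMinOn hK hcont.continuousOn
      have hy₀x : f xstar < f y₀ := by
        rcases (hmin y₀).lt_or_eq with h | h
        · exact h
        exfalso
        have hy₀ : y₀ = xstar := huniq y₀ (fun w => h ▸ hmin w)
        rw [hy₀] at hy₀K
        exact hy₀K.2 (mem_ball_self hδ)
      set M : ℝ := f y₀ - f xstar with hM
      have hMpos : 0 < M := by rw [hM]; linarith
      refine ⟨max 1 (R ^ 2 / M), le_max_left _ _, fun t ht z hz => ?_⟩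
      have ht1 : (1:ℝ) ≤ t := le_trans (le_max_left _ _) ht
      have htpos : (0:ℝ) < t := by linarith
      obtain ⟨hzB, hzf⟩ := hzball t htpos z hz
      have hRM : R ^ 2 / M ≤ t := le_trans (le_max_right _ _) ht
      have hR2 : R ^ 2 ≤ t * M := (div_le_iff₀ hMpos).mp hRM
      have hfz : f z < f y₀ := by
        have hhalf : R ^ 2 / (2 * t) ≤ M / 2 := by
          rw [div_le_div_iff₀ (by linarith) (by norm_num)]
          nlinarith
        have := hzf.trans (by linarith : f xstar + R ^ 2 / (2 * t) ≤ f xstar + M / 2)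
        rw [hM] at this
        linarith
      by_contra hzb
      have hzK : z ∈ closedBall x R \ ball xstar δ :=
        ⟨hzB, fun hc => hzb (ball_subset_closedBall hc)⟩
      exact absurd (hy₀min hzK) (not_le.2 hfz)
  refine ⟨t₀, lt_of_lt_of_le one_pos ht₀, fun t ht => ?_⟩
  have htpos : (0:ℝ) < t := lt_of_lt_of_le (lt_of_lt_of_le one_pos ht₀) ht
  -- existence of a minimizer
  obtain ⟨z, hz⟩ : ∃ z : E, ∀ w, f z + ‖z - x‖ ^ 2 / (2 * t) ≤ f w + ‖w - x‖ ^ 2 / (2 * t) := by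
    have h2t : (0:ℝ) < 2 * t := by linarith
    have h1 : Tendsto (fun z : E => ‖z‖ + -‖x‖) (cocompact E) atTop :=
      tendsto_atTop_add_const_right (cocompact E) (-‖x‖) tendsto_norm_cocompact_atTop
    have h2 : Tendsto (fun z : E => ‖z - x‖) (cocompact E) atTop :=
      tendsto_atTop_mono (fun z => by have := norm_sub_norm_le z x; linarith) h1
    have h3 : Tendsto (fun s : ℝ => s ^ 2 / (2 * t)) atTop atTop :=
      (tendsto_pow_atTop two_ne_zero).atTop_div_const h2t
    have h4 : Tendsto (fun z : E => ‖z - x‖ ^ 2 / (2 * t)) (cocompact E) atTop := h3.comp h2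
    have h5 : Tendsto (fun z : E => f xstar + ‖z - x‖ ^ 2 / (2 * t)) (cocompact E) atTop :=
      tendsto_atTop_add_const_left _ _ h4
    have h6 : Tendsto (fun z : E => f z + ‖z - x‖ ^ 2 / (2 * t)) (cocompact E) atTop :=
      tendsto_atTop_mono (fun z => add_le_add_left (hmin z) _) h5
    exact (hcont.add (((continuous_id.sub continuous_const).norm.pow 2).div_const (2*t)))
      |>.exists_forall_le h6
  -- stationarity
  have hstat : ∀ y : E, (∀ w, f y + ‖y - x‖ ^ 2 / (2 * t) ≤ f w + ‖w - x‖ ^ 2 / (2 * t)) →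
      ∀ v : E, D y v = -(inner ℝ (y - x) v : ℝ) / t := by
    intro y hy v
    have hyO : y ∈ O := hδO (hloc t ht y hy)
    have hq : HasFDerivAt (fun z : E => ‖z - x‖ ^ 2)
        ((2:ℕ) • (innerSL ℝ (y - x)).comp (ContinuousLinearMap.id ℝ E)) y := by
      simpa using ((hasFDerivAt_id y).sub_const x).norm_sq
    have hq2 : HasFDerivAt (fun z : E => ‖z - x‖ ^ 2 / (2 * t))
        ((2 * t)⁻¹ • ((2:ℕ) • (innerSL ℝ (y - x)).comp (ContinuousLinearMap.id ℝ E))) y := by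
      have h' := hq.const_smul ((2 * t)⁻¹)
      have heq : (fun z : E => (2 * t)⁻¹ • ‖z - x‖ ^ 2) = fun z : E => ‖z - x‖ ^ 2 / (2 * t) := by
        funext z; rw [smul_eq_mul, div_eq_inv_mul]
      rw [← heq]; exact h'
    have hg : HasFDerivAt (fun z : E => f z + ‖z - x‖ ^ 2 / (2 * t))
        (D y + (2 * t)⁻¹ • ((2:ℕ) • (innerSL ℝ (y - x)).comp (ContinuousLinearMap.id ℝ E))) y :=
      ((hfdiff y hyO).hasFDerivAt).add hq2
    have hlm : IsLocalMin (fun z : E => f z + ‖z - x‖ ^ 2 / (2 * t)) y :=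
      Filter.Eventually.of_forall (fun w => hy w)
    have h0 : fderiv ℝ (fun z : E => f z + ‖z - x‖ ^ 2 / (2 * t)) y = 0 := hlm.fderiv_eq_zero
    have hfd := hg.fderiv
    rw [h0] at hfd
    have happ := congrArg (fun A : E →L[ℝ] ℝ => A v) hfd.symm
    simp only [ContinuousLinearMap.zero_apply, ContinuousLinearMap.add_apply,
      ContinuousLinearMap.smul_apply, ContinuousLinearMap.coe_smul', Pi.smul_apply,
      ContinuousLinearMap.coe_comp', Function.comp_apply, ContinuousLinearMap.coe_id', id_eq,
      innerSL_apply_apply, smul_eq_mul, nsmul_eq_mul, Nat.cast_ofNat] at happ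
    have htne : t ≠ 0 := htpos.ne'
    field_simp at happ ⊢
    linarith
  refine ⟨z, hz, fun y hy => ?_⟩
  have hzB := hloc t ht z hz
  have hyB := hloc t ht y hy
  have h1 := hmono y hyB z hzB
  have h2 : (D y - D z) (y - z) = -‖y - z‖ ^ 2 / t := by
    rw [ContinuousLinearMap.sub_apply, hstat y hy, hstat z hz,
      ← real_inner_self_eq_norm_sq, show (y : E) - z = (y - x) - (z - x) from by abel]
    simp only [inner_sub_left]
    ring
  have h3 : m / 2 * ‖y - z‖ ^ 2 * t ≤ -‖y - z‖ ^ 2 := by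
    have := h1.trans (le_of_eq h2)
    rw [neg_div] at this
    linarith [(le_div_iff₀ htpos).mp (this.trans (le_of_eq (neg_div t (‖y - z‖^2)).symm))]
  have h4 : ‖y - z‖ ^ 2 = 0 := by
    have h5 : 0 ≤ m / 2 * ‖y - z‖ ^ 2 * t := by positivity
    linarith [sq_nonneg ‖y - z‖]
  have h5 : y - z = 0 := by
    have := (pow_eq_zero_iff (two_ne_zero)).1 h4
    simpa using this
  exact sub_eq_zero.mp h5

open Filter

/-- Proposition 3.3(2). If `f : ℝ^d → ℝ` is continuous, `p`-coercive,
has a unique global minimizer `x*` which is nondegenerate (`f` is `C²` on a neighborhood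
`U` of `x*` and its Hessian at `x*` is nonsingular), then for every `x` there exists
`t₀ > 0` such that for all `t ≥ t₀`, `prox_{tf}(x)` is a singleton, i.e. the function
`z ↦ f z + ‖z - x‖²/(2t)` has a unique global minimizer. -/
theorem prox_single_valued_of_nondegenerate {d : ℕ}
    (f : EuclideanSpace ℝ (Fin d) → ℝ) (p : ℝ) (hp : 0 < p)
    (hcont : Continuous f)
    (hcoer : Tendsto (fun z : EuclideanSpace ℝ (Fin d) => f z / ‖z‖ ^ p)
      (comap norm atTop) atTop)
    (xstar : EuclideanSpace ℝ (Fin d)) (hmin : ∀ z, f xstar ≤ f z)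
    (huniq : ∀ z, (∀ w, f z ≤ f w) → z = xstar)
    (U : Set (EuclideanSpace ℝ (Fin d))) (hU : U ∈ nhds xstar)
    (hC2 : ContDiffOn ℝ 2 f U)
    (hnondeg : Function.Injective (fderiv ℝ (fderiv ℝ f) xstar)) :
    ∀ x : EuclideanSpace ℝ (Fin d), ∃ t₀ > (0 : ℝ), ∀ t ≥ t₀,
      ∃! z : EuclideanSpace ℝ (Fin d), ∀ w,
        f z + ‖z - x‖ ^ 2 / (2 * t) ≤ f w + ‖w - x‖ ^ 2 / (2 * t) :=
  aux_prox f hcont xstar hmin huniq U hU hC2 hnondeg
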